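/- arXiv:1704.03787 — 9 statements merged into one kernel-verified Lean document; each statement's English description precedes it below -/
import Mathlib

section
/- Let σ be an automorphism of G(V). Then for every vertex W of G(V), dim σ(W) = dim W; that is, σ sends each k-dimensional nontrivial proper subspace of V to a subspace of the same dimension k, for every 1 ≤ k ≤ n−1. -/
/-- The subspace sum graph: vertices are the nontrivial proper subspaces of `V`,
two distinct vertices being adjacent iff their sum is `V`. -/
def sumGraph (F V : Type*) [Field F] [AddCommGroup V] [Module F V] :
    SimpleGraph {W : Submodule F V // W ≠ ⊥ ∧ W ≠ ⊤} where
  Adj W₁ W₂ := W₁ ≠ W₂ ∧ W₁.1 ⊔ W₂.1 = ⊤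
  symm := ⟨fun a b h => ⟨h.1.symm, by rw [sup_comm]; exact h.2⟩⟩
  loopless := ⟨fun a h => h.1 rfl⟩

open Module Submodule

section Aux

variable {F V : Type*} [Field F] [AddCommGroup V] [Module F V]

/-- one can enlarge a submodule to any intermediate finrank -/
lemma aux_exists_sup [FiniteDimensional F V] (W : Submodule F V) {k : ℕ}
    (h1 : finrank F W ≤ k) (h2 : k ≤ finrank F V) :
    ∃ W' : Submodule F V, W ≤ W' ∧ finrank F W' = k := by
  induction k, h1 using Nat.le_induction with
  | base => exact ⟨W, le_rfl, rfl⟩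
  | succ k hk ih =>
    obtain ⟨W', hWW', hW'⟩ := ih (le_of_lt (Nat.lt_of_succ_le h2))
    have hW'top : W' ≠ ⊤ := by
      intro h
      rw [h, finrank_top] at hW'
      omega
    obtain ⟨x, hx⟩ : ∃ x : V, x ∉ W' := by
      by_contra h
      push_neg at h
      exact hW'top (eq_top_iff.2 fun y _ => h y)
    have hx0 : x ≠ 0 := fun h => hx (h ▸ W'.zero_mem)
    refine ⟨W' ⊔ Submodule.span F {x}, hWW'.trans le_sup_left, ?_⟩
    have hinf : W' ⊓ Submodule.span F {x} = ⊥ := by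
      rw [eq_bot_iff]
      rintro y ⟨hy1, hy2⟩
      obtain ⟨c, rfl⟩ := Submodule.mem_span_singleton.1 hy2
      rcases eq_or_ne c 0 with rfl | hc
      · simp
      · exfalso
        exact hx (by simpa [hc] using W'.smul_mem c⁻¹ hy1)
    have := Submodule.finrank_sup_add_finrank_inf_eq W' (Submodule.span F {x})
    rw [hinf, finrank_bot, finrank_span_singleton hx0] at this
    omega

/-- two submodules of the same finrank are related by a linear automorphism -/
lemma aux_exists_equiv [FiniteDimensional F V] {W₁ W₂ : Submodule F V}
    (h : finrank F W₁ = finrank F W₂) :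
    ∃ e : V ≃ₗ[F] V, Submodule.map (e : V →ₗ[F] V) W₁ = W₂ := by
  obtain ⟨C₁, hC₁⟩ := W₁.exists_isCompl
  obtain ⟨C₂, hC₂⟩ := W₂.exists_isCompl
  have h₁ := Submodule.finrank_sup_add_finrank_inf_eq W₁ C₁
  have h₂ := Submodule.finrank_sup_add_finrank_inf_eq W₂ C₂
  rw [hC₁.sup_eq_top, hC₁.inf_eq_bot, finrank_top, finrank_bot] at h₁
  rw [hC₂.sup_eq_top, hC₂.inf_eq_bot, finrank_top, finrank_bot] at h₂
  have hC : finrank F C₁ = finrank F C₂ := by omega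
  obtain ⟨e₁⟩ := FiniteDimensional.nonempty_linearEquiv_of_finrank_eq h
  obtain ⟨e₂⟩ := FiniteDimensional.nonempty_linearEquiv_of_finrank_eq hC
  set e : V ≃ₗ[F] V :=
    (W₁.prodEquivOfIsCompl C₁ hC₁).symm.trans
      ((e₁.prodCongr e₂).trans (W₂.prodEquivOfIsCompl C₂ hC₂)) with he
  have key : ∀ w ∈ W₁, e w ∈ W₂ := by
    intro w hw
    have hsymm : (W₁.prodEquivOfIsCompl C₁ hC₁).symm w = ((⟨w, hw⟩ : W₁), 0) :=
      Submodule.prodEquivOfIsCompl_symm_apply_left W₁ C₁ hC₁ ⟨w, hw⟩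
    have : e w = (e₁ ⟨w, hw⟩ : V) := by
      simp [he, LinearEquiv.trans_apply, hsymm]
    rw [this]
    exact (e₁ ⟨w, hw⟩).2
  have key' : ∀ w ∈ W₂, e.symm w ∈ W₁ := by
    intro w hw
    have hsymm : (W₂.prodEquivOfIsCompl C₂ hC₂).symm w = ((⟨w, hw⟩ : W₂), 0) :=
      Submodule.prodEquivOfIsCompl_symm_apply_left W₂ C₂ hC₂ ⟨w, hw⟩
    have : e.symm w = (e₁.symm ⟨w, hw⟩ : V) := by
      simp [he, LinearEquiv.trans_apply, hsymm, LinearEquiv.prodCongr_symm,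
        LinearEquiv.prodCongr_apply]
    rw [this]
    exact (e₁.symm ⟨w, hw⟩).2
  refine ⟨e, le_antisymm ?_ ?_⟩
  · rintro y ⟨w, hw, rfl⟩
    exact key w hw
  · intro w hw
    exact ⟨e.symm w, key' w hw, e.apply_symm_apply w⟩

end Aux

section Graph

variable {F V : Type*} [Field F] [Fintype F] [AddCommGroup V] [Module F V]
  [FiniteDimensional F V]

lemma finite_submodule_aux : Finite (Submodule F V) := by
  haveI : Finite V := Module.finite_of_finite F
  exact Finite.of_injective (fun W => (W : Set V)) SetLike.coe_injective

lemma mem_vertex (e : V ≃ₗ[F] V) (W : Submodule F V) (h : W ≠ ⊥ ∧ W ≠ ⊤) :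
    Submodule.map (e : V →ₗ[F] V) W ≠ ⊥ ∧ Submodule.map (e : V →ₗ[F] V) W ≠ ⊤ := by
  have hinj : Function.Injective (Submodule.map (e : V →ₗ[F] V)) :=
    Submodule.map_injective_of_injective e.injective
  constructor
  · intro hb
    exact h.1 (hinj (by rw [hb, Submodule.map_bot]))
  · intro ht
    refine h.2 (hinj ?_)
    rw [ht]
    simp

/-- a linear automorphism induces a graph automorphism of the sum graph -/
noncomputable def sumGraphIso (e : V ≃ₗ[F] V) : sumGraph F V ≃g sumGraph F V where
  toFun W := ⟨Submodule.map (e : V →ₗ[F] V) W.1, mem_vertex e W.1 W.2⟩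
  invFun W := ⟨Submodule.map (e.symm : V →ₗ[F] V) W.1, mem_vertex e.symm W.1 W.2⟩
  left_inv W := Subtype.ext (by
    show Submodule.map (e.symm : V →ₗ[F] V) (Submodule.map (e : V →ₗ[F] V) W.1) = W.1
    rw [← Submodule.map_comp]
    simp)
  right_inv W := Subtype.ext (by
    show Submodule.map (e : V →ₗ[F] V) (Submodule.map (e.symm : V →ₗ[F] V) W.1) = W.1
    rw [← Submodule.map_comp]
    simp)
  map_rel_iff' := by
    rintro ⟨W₁, h₁⟩ ⟨W₂, h₂⟩
    have hinj : Function.Injective (Submodule.map (e : V →ₗ[F] V)) :=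
      Submodule.map_injective_of_injective e.injective
    constructor
    · rintro ⟨ha, hb⟩
      refine ⟨fun hh => ha ?_, ?_⟩
      · exact Subtype.ext (congrArg (Submodule.map (e : V →ₗ[F] V))
          (congrArg Subtype.val hh))
      · apply hinj
        rw [Submodule.map_sup]
        have hb' : Submodule.map (e : V →ₗ[F] V) W₁ ⊔ Submodule.map (e : V →ₗ[F] V) W₂ =
            ⊤ := hb
        rw [hb']
        simp
    · rintro ⟨ha, hb⟩
      refine ⟨fun hh => ha (Subtype.ext (hinj (congrArg Subtype.val hh))), ?_⟩
      show Submodule.map (e : V →ₗ[F] V) W₁ ⊔ Submodule.map (e : V →ₗ[F] V) W₂ = ⊤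
      rw [← Submodule.map_sup, hb]
      simp

lemma sumGraphIso_apply (e : V ≃ₗ[F] V) (W : {W : Submodule F V // W ≠ ⊥ ∧ W ≠ ⊤}) :
    ((sumGraphIso e) W).1 = Submodule.map (e : V →ₗ[F] V) W.1 := rfl

/-- the "degree" of a vertex -/
noncomputable def vdeg (W : {W : Submodule F V // W ≠ ⊥ ∧ W ≠ ⊤}) : ℕ :=
  Nat.card {U : {W : Submodule F V // W ≠ ⊥ ∧ W ≠ ⊤} // (sumGraph F V).Adj W U}

lemma vdeg_iso (τ : sumGraph F V ≃g sumGraph F V)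
    (W : {W : Submodule F V // W ≠ ⊥ ∧ W ≠ ⊤}) : vdeg (τ W) = vdeg W :=
  (Nat.card_congr (τ.toEquiv.subtypeEquiv (fun U => τ.map_adj_iff.symm))).symm

lemma vdeg_lt_of_lt {W₁ W₂ : {W : Submodule F V // W ≠ ⊥ ∧ W ≠ ⊤}}
    (h : W₁.1 < W₂.1) : vdeg W₁ < vdeg W₂ := by
  classical
  haveI : Finite (Submodule F V) := finite_submodule_aux
  have hfin : finrank F W₁.1 < finrank F W₂.1 := Submodule.finrank_lt_finrank_of_lt h
  have hss : {U | (sumGraph F V).Adj W₁ U} ⊂ {U | (sumGraph F V).Adj W₂ U} := by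
    rw [Set.ssubset_iff_of_subset]
    · -- find a neighbor of W₂ that is not a neighbor of W₁
      obtain ⟨C, hC⟩ := W₂.1.exists_isCompl
      have hCbot : C ≠ ⊥ := by
        intro hb
        rw [hb] at hC
        exact W₂.2.2 (by simpa using hC.sup_eq_top)
      have hCtop : C ≠ ⊤ := by
        intro ht
        rw [ht] at hC
        exact W₂.2.1 (by simpa using hC.inf_eq_bot)
      have hCW₂ : W₂.1 ≠ C := by
        intro hb
        rw [← hb] at hC
        exact W₂.2.1 (by simpa using hC.inf_eq_bot)
      have hsum := Submodule.finrank_sup_add_finrank_inf_eq W₂.1 C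
      rw [hC.sup_eq_top, hC.inf_eq_bot, finrank_top, finrank_bot] at hsum
      have hsum' := Submodule.finrank_sup_add_finrank_inf_eq W₁.1 C
      have hlt : finrank F ↥(W₁.1 ⊔ C) < finrank F V := by omega
      have hnotop : W₁.1 ⊔ C ≠ ⊤ := by
        intro hh
        rw [hh, finrank_top] at hlt
        omega
      refine ⟨⟨C, hCbot, hCtop⟩, ?_, ?_⟩
      · exact ⟨fun hh => hCW₂ (congrArg Subtype.val hh), hC.sup_eq_top⟩
      · rintro ⟨-, hsup⟩
        exact hnotop hsup
    · -- neighbors of W₁ are neighbors of W₂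
      rintro U ⟨hne, hsup⟩
      refine ⟨?_, ?_⟩
      · intro hh
        have h1 : W₁.1 ⊔ U.1 = W₂.1 := by
          rw [← congrArg Subtype.val hh]
          exact sup_eq_right.2 h.le
        exact W₂.2.2 (h1 ▸ hsup)
      · have hle : W₁.1 ⊔ U.1 ≤ W₂.1 ⊔ U.1 := sup_le_sup_right h.le _
        rw [hsup] at hle
        exact top_unique hle
  have := Set.ncard_lt_ncard hss (Set.toFinite _)
  rw [vdeg, vdeg]
  rw [show (Nat.card {U : {W : Submodule F V // W ≠ ⊥ ∧ W ≠ ⊤} // (sumGraph F V).Adj W₁ U}) =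
    (Nat.card ↥{U | (sumGraph F V).Adj W₁ U}) from rfl,
    show (Nat.card {U : {W : Submodule F V // W ≠ ⊥ ∧ W ≠ ⊤} // (sumGraph F V).Adj W₂ U}) =
    (Nat.card ↥{U | (sumGraph F V).Adj W₂ U}) from rfl,
    Nat.card_coe_set_eq, Nat.card_coe_set_eq]
  exact this

lemma vdeg_lt_of_finrank_lt {W₁ W₂ : {W : Submodule F V // W ≠ ⊥ ∧ W ≠ ⊤}}
    (h : finrank F W₁.1 < finrank F W₂.1) : vdeg W₁ < vdeg W₂ := by
  have hn : finrank F W₂.1 ≤ finrank F V :=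
    (Submodule.finrank_le W₂.1)
  obtain ⟨W', hW'le, hW'rank⟩ := aux_exists_sup W₁.1 (le_of_lt h) hn
  have hW'bot : W' ≠ ⊥ := by
    intro hb
    exact W₁.2.1 (le_bot_iff.1 (hb ▸ hW'le))
  have hW'top : W' ≠ ⊤ := by
    intro ht
    have := Submodule.finrank_lt (K := F) (V := V) W₂.2.2
    rw [ht, finrank_top] at hW'rank
    omega
  have hlt : W₁.1 < W' := lt_of_le_of_ne hW'le (fun hh => by rw [← hh] at hW'rank; omega)
  obtain ⟨e, he⟩ := aux_exists_equiv (hW'rank.trans rfl : finrank F W' = finrank F W₂.1)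
  have step1 : vdeg W₁ < vdeg (⟨W', hW'bot, hW'top⟩ :
      {W : Submodule F V // W ≠ ⊥ ∧ W ≠ ⊤}) := vdeg_lt_of_lt hlt
  have step2 : vdeg (⟨W', hW'bot, hW'top⟩ :
      {W : Submodule F V // W ≠ ⊥ ∧ W ≠ ⊤}) = vdeg W₂ := by
    have := vdeg_iso (sumGraphIso e) ⟨W', hW'bot, hW'top⟩
    rw [← this]
    congr 1
    apply Subtype.ext
    rw [sumGraphIso_apply]
    exact he
  omega

end Graph

/-- an automorphism of `G(V)` preserves the dimension of every vertex. -/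
theorem stmt_2 (F V : Type*) [Field F] [Fintype F] [AddCommGroup V] [Module F V]
    [FiniteDimensional F V] (n : ℕ) (hn : 3 ≤ n) (hdim : Module.finrank F V = n)
    (σ : sumGraph F V ≃g sumGraph F V) :
    ∀ W : {W : Submodule F V // W ≠ ⊥ ∧ W ≠ ⊤},
      Module.finrank F (σ W).1 = Module.finrank F W.1 := by
  intro W
  have hdeg : vdeg (σ W) = vdeg W := vdeg_iso σ W
  rcases lt_trichotomy (Module.finrank F (σ W).1) (Module.finrank F W.1) with h | h | h
  · exact absurd hdeg (Nat.ne_of_lt (vdeg_lt_of_finrank_lt h))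
  · exact h
  · exact absurd hdeg (Nat.ne_of_gt (vdeg_lt_of_finrank_lt h))
end

section
/- Let σ be an automorphism of G(V), let W be a k-dimensional subspace of V with 2 ≤ k ≤ n−1, let {α₁, …, α_k} be a basis of W, and suppose σ(⟨α_i⟩) = ⟨β_i⟩ for 1 ≤ i ≤ k, where ⟨v⟩ denotes the 1-dimensional subspace spanned by a nonzero vector v. Then ⟨β_i⟩ ⊆ σ(W) for every 1 ≤ i ≤ k. -/
open Module Submodule

lemma key_lemma (F V : Type*) [Field F] [AddCommGroup V] [Module F V]
    [FiniteDimensional F V] (n : ℕ) (hn : 3 ≤ n) (hdim : Module.finrank F V = n)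
    (L Y : Submodule F V) (hL1 : finrank F L = 1)
    (hnadj : ¬(L ≠ Y ∧ L ⊔ Y = ⊤))
    (hadj : ∀ Z : Submodule F V, Z ≠ ⊥ → Z ≠ ⊤ → L ≠ Z → L ⊔ Z = ⊤ →
      (Y ≠ Z ∧ Y ⊔ Z = ⊤) ∨ Z = Y) : L ≤ Y := by
  by_contra h
  obtain ⟨v, hvL, hvY⟩ := SetLike.not_le_iff_exists.mp h
  have hLY : L ⊔ Y ≠ ⊤ := by
    intro htop
    have : L = Y := by
      by_contra hne; exact hnadj ⟨hne, htop⟩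
    exact hvY (this ▸ hvL)
  have hinf : L ⊓ Y = ⊥ := by
    have hle : finrank F ↥(L ⊓ Y) ≤ 1 := hL1 ▸ Submodule.finrank_mono inf_le_left
    interval_cases hr : finrank F ↥(L ⊓ Y)
    · exact Submodule.finrank_eq_zero.mp hr
    · exfalso
      have : L ⊓ Y = L := Submodule.eq_of_le_of_finrank_le inf_le_left (by omega)
      exact h (this ▸ inf_le_right)
  obtain ⟨U, hU⟩ := Submodule.exists_isCompl (L ⊔ Y)
  set H := Y ⊔ U with hH
  have hYU : Y ⊓ U = ⊥ := (hU.disjoint.mono_left le_sup_right).eq_bot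
  have e1 : finrank F ↥(L ⊔ Y) + finrank F ↥(L ⊓ Y) = finrank F L + finrank F Y :=
    Submodule.finrank_sup_add_finrank_inf_eq L Y
  have e2 : finrank F ↥(Y ⊔ U) + finrank F ↥(Y ⊓ U) = finrank F Y + finrank F U :=
    Submodule.finrank_sup_add_finrank_inf_eq Y U
  have e3 : finrank F ↥((L ⊔ Y) ⊔ U) + finrank F ↥((L ⊔ Y) ⊓ U)
      = finrank F ↥(L ⊔ Y) + finrank F U :=
    Submodule.finrank_sup_add_finrank_inf_eq (L ⊔ Y) U
  rw [hU.sup_eq_top, hU.inf_eq_bot] at e3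
  rw [hinf] at e1
  rw [hYU] at e2
  rw [finrank_bot] at e1 e2 e3
  rw [finrank_top, hdim] at e3
  have hHdim : finrank F ↥H = n - 1 := by rw [hH]; omega
  have hsup : H ⊔ L = ⊤ := by
    rw [hH, sup_right_comm, sup_comm Y L, hU.sup_eq_top]
  have e4 : finrank F ↥(H ⊔ L) + finrank F ↥(H ⊓ L) = finrank F ↥H + finrank F L :=
    Submodule.finrank_sup_add_finrank_inf_eq H L
  rw [hsup, finrank_top, hdim, hHdim, hL1] at e4
  have hHL : H ⊓ L = ⊥ := Submodule.finrank_eq_zero.mp (by omega)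
  have hv0 : v ≠ 0 := fun h0 => hvY (h0 ▸ Y.zero_mem)
  have hvH : v ∉ H := by
    intro hvH
    have : v ∈ H ⊓ L := ⟨hvH, hvL⟩
    rw [hHL] at this
    exact hv0 this
  have hHbot : H ≠ ⊥ := by
    intro hb
    rw [hb, finrank_bot] at hHdim; omega
  have hHtop : H ≠ ⊤ := fun ht => hvH (ht ▸ Submodule.mem_top)
  have hLH : L ≠ H := by
    intro he
    rw [← he, hL1] at hHdim; omega
  rcases hadj H hHbot hHtop hLH (by rw [sup_comm]; exact hsup) with ⟨_, hYH⟩ | hHY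
  · rw [hH, ← sup_assoc, sup_idem] at hYH
    exact hHtop hYH
  · apply hLY
    rw [sup_comm]
    rw [hHY] at hsup
    exact hsup

/-- if `σ` is an automorphism of `G(V)`, `W` is `k`-dimensional with
basis `α₁, …, α_k` (`2 ≤ k ≤ n-1`) and `σ⟨αᵢ⟩ = ⟨βᵢ⟩`, then `⟨βᵢ⟩ ⊆ σ(W)` for all `i`. -/
theorem stmt_3 (F V : Type*) [Field F] [Fintype F] [AddCommGroup V] [Module F V]
    [FiniteDimensional F V] (n : ℕ) (hn : 3 ≤ n) (hdim : Module.finrank F V = n)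
    (σ : sumGraph F V ≃g sumGraph F V)
    (k : ℕ) (hk1 : 2 ≤ k) (hk2 : k ≤ n - 1)
    (W : Submodule F V) (hW : Module.finrank F W = k)
    (α β : Fin k → V)
    (hli : LinearIndependent F α) (hspan : Submodule.span F (Set.range α) = W)
    (hσ : ∀ (i : Fin k) (h : Submodule.span F {α i} ≠ ⊥ ∧ Submodule.span F {α i} ≠ ⊤),
      (σ ⟨Submodule.span F {α i}, h⟩).1 = Submodule.span F {β i}) :
    ∀ (i : Fin k) (hWv : W ≠ ⊥ ∧ W ≠ ⊤),
      Submodule.span F {β i} ≤ (σ ⟨W, hWv⟩).1 := by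
  intro i hWv
  have hα0 : α i ≠ 0 := hli.ne_zero i
  have hLbot : Submodule.span F {α i} ≠ ⊥ := by
    simpa [Submodule.span_singleton_eq_bot] using hα0
  have hL1 : finrank F (Submodule.span F {α i}) = 1 := finrank_span_singleton hα0
  have hLtop : Submodule.span F {α i} ≠ ⊤ := by
    intro ht
    rw [ht, finrank_top, hdim] at hL1; omega
  have hLW : Submodule.span F {α i} ≤ W := by
    rw [← hspan]
    exact Submodule.span_mono (Set.singleton_subset_iff.mpr ⟨i, rfl⟩)
  set vL : {W : Submodule F V // W ≠ ⊥ ∧ W ≠ ⊤} :=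
    ⟨Submodule.span F {α i}, hLbot, hLtop⟩ with hvLdef
  set vW : {W : Submodule F V // W ≠ ⊥ ∧ W ≠ ⊤} := ⟨W, hWv⟩ with hvWdef
  have hβ : (σ vL).1 = Submodule.span F {β i} := hσ i ⟨hLbot, hLtop⟩
  rw [← hβ]
  have hβ0 : β i ≠ 0 := by
    intro h0
    apply (σ vL).2.1
    rw [hβ, h0, Submodule.span_singleton_eq_bot.mpr rfl]
  apply key_lemma F V n hn hdim _ _ (by rw [hβ]; exact finrank_span_singleton hβ0)
  · rintro ⟨hne, htop⟩
    have : (sumGraph F V).Adj (σ vL) (σ vW) :=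
      ⟨fun he => hne (congrArg Subtype.val he), htop⟩
    have hadj : (sumGraph F V).Adj vL vW := σ.map_rel_iff.mp this
    have h2 : Submodule.span F {α i} ⊔ W = ⊤ := hadj.2
    rw [sup_eq_right.mpr hLW] at h2
    exact hWv.2 h2
  · intro Z hZb hZt hne hsup
    set vZ : {W : Submodule F V // W ≠ ⊥ ∧ W ≠ ⊤} := ⟨Z, hZb, hZt⟩ with hvZdef
    have hadjLZ : (sumGraph F V).Adj (σ vL) vZ :=
      ⟨fun he => hne (congrArg Subtype.val he), hsup⟩
    rw [show vZ = σ (σ.symm vZ) from (σ.apply_symm_apply vZ).symm] at hadjLZ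
    have hadjLZ' : (sumGraph F V).Adj vL (σ.symm vZ) := σ.map_rel_iff.mp hadjLZ
    have hsupW : W ⊔ (σ.symm vZ).1 = ⊤ := by
      rw [eq_top_iff]
      calc (⊤ : Submodule F V) = Submodule.span F {α i} ⊔ (σ.symm vZ).1 := hadjLZ'.2.symm
        _ ≤ W ⊔ (σ.symm vZ).1 := sup_le_sup_right hLW _
    by_cases hZW : σ.symm vZ = vW
    · right
      rw [hvZdef] at hZW
      have := congrArg σ hZW
      rw [σ.apply_symm_apply] at this
      exact congrArg Subtype.val this
    · left
      have hadjWZ : (sumGraph F V).Adj vW (σ.symm vZ) := ⟨fun he => hZW he.symm, hsupW⟩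
      have := σ.map_rel_iff.mpr hadjWZ
      rw [σ.apply_symm_apply] at this
      exact ⟨fun he => this.1 (Subtype.ext he), this.2⟩
end

section
/- Let σ be an automorphism of G(V), let W be a k-dimensional subspace of V with 2 ≤ k ≤ n−1, let {α₁, …, α_k} be a basis of W, and suppose σ(⟨α_i⟩) = ⟨β_i⟩ for 1 ≤ i ≤ k, where ⟨v⟩ denotes the 1-dimensional subspace spanned by a nonzero vector v. Then σ(W) = ⟨β₁, …, β_k⟩, the subspace spanned by β₁, …, β_k. -/
lemma sumGraph_le_iff (F V : Type*) [Field F] [AddCommGroup V] [Module F V]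
    [FiniteDimensional F V]
    (A B : {W : Submodule F V // W ≠ ⊥ ∧ W ≠ ⊤}) :
    A.1 ≤ B.1 ↔ ∀ U, (sumGraph F V).Adj U A → (sumGraph F V).Adj U B := by
  constructor
  · rintro hAB U ⟨hne, hsup⟩
    have h2 : U.1 ⊔ B.1 = ⊤ :=
      top_le_iff.mp (le_trans hsup.ge (sup_le le_sup_left (hAB.trans le_sup_right)))
    refine ⟨fun hUB => ?_, h2⟩
    rw [hUB, sup_idem] at h2
    exact B.2.2 h2
  · intro h
    by_contra hAB
    obtain ⟨x, hxA, hxB⟩ := SetLike.not_le_iff_exists.mp hAB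
    obtain ⟨f, hfx, hfB⟩ := Submodule.exists_dual_map_eq_bot_of_notMem hxB inferInstance
    set H := LinearMap.ker f with hH
    have hBH : B.1 ≤ H := by
      intro b hb
      simpa [hH, LinearMap.mem_ker] using
        (LinearMap.le_ker_iff_map.mpr hfB) hb
    have hxH : x ∉ H := by simpa [hH, LinearMap.mem_ker] using hfx
    have hHsup : H ⊔ Submodule.span F {x} = ⊤ := by
      rw [eq_top_iff]
      intro v _
      have hv : v = (v - (f v / f x) • x) + (f v / f x) • x := by ring_nf; abel
      rw [hv]
      refine Submodule.add_mem_sup ?_ ?_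
      · simp only [hH, LinearMap.mem_ker, map_sub, map_smul, smul_eq_mul]
        field_simp
        simp
      · exact Submodule.smul_mem _ _ (Submodule.mem_span_singleton_self x)
    -- complement of A ⊓ H inside H
    obtain ⟨p, hp⟩ := Submodule.exists_isCompl
      (Submodule.comap H.subtype (A.1 ⊓ H) : Submodule F H)
    set U := Submodule.map H.subtype p with hU
    have hUH : U ≤ H := Submodule.map_subtype_le _ _
    have hUsup : U ⊔ (A.1 ⊓ H) = H := by
      have := congrArg (Submodule.map H.subtype) hp.sup_eq_top
      rw [Submodule.map_sup, Submodule.map_comap_subtype, Submodule.map_subtype_top,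
        inf_eq_right.mpr inf_le_right] at this
      rw [hU, sup_comm]
      exact this
    have hUA : U ⊔ A.1 = ⊤ := by
      have hle2 : H ⊔ Submodule.span F {x} ≤ U ⊔ A.1 := by
        refine sup_le ?_ ?_
        · rw [← hUsup]
          exact sup_le le_sup_left (le_trans inf_le_left le_sup_right)
        · exact le_trans ((Submodule.span_singleton_le_iff_mem _ _).mpr hxA) le_sup_right
      exact top_le_iff.mp (le_trans (le_of_eq hHsup.symm) hle2)
    have hUbot : U ≠ ⊥ := by
      intro hb
      rw [hb, bot_sup_eq] at hUA
      exact A.2.2 hUA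
    have hUtop : U ≠ ⊤ := fun hh => hxH (hh ▸ hUH <| Submodule.mem_top)
    have hadj : (sumGraph F V).Adj ⟨U, hUbot, hUtop⟩ A := by
      refine ⟨?_, hUA⟩
      intro hh
      have : U = A.1 := congrArg Subtype.val hh
      rw [this, sup_idem] at hUA
      exact A.2.2 hUA
    have := (h _ hadj).2
    have hle : (⟨U, hUbot, hUtop⟩ : {W : Submodule F V // W ≠ ⊥ ∧ W ≠ ⊤}).1 ⊔ B.1 ≤ H :=
      sup_le hUH hBH
    rw [this] at hle
    exact hxH (hle Submodule.mem_top)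

lemma sumGraph_iso_le_iff (F V : Type*) [Field F] [AddCommGroup V] [Module F V]
    [FiniteDimensional F V] (σ : sumGraph F V ≃g sumGraph F V)
    (A B : {W : Submodule F V // W ≠ ⊥ ∧ W ≠ ⊤}) :
    (σ A).1 ≤ (σ B).1 ↔ A.1 ≤ B.1 := by
  rw [sumGraph_le_iff, sumGraph_le_iff]
  constructor
  · intro h U hadj
    have := h (σ U) (σ.map_adj_iff.mpr hadj)
    exact σ.map_adj_iff.mp this
  · intro h U hadj
    have h1 : (sumGraph F V).Adj (σ.symm U) A := by
      have := σ.symm.map_adj_iff.mpr hadj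
      simpa using this
    have := σ.map_adj_iff.mpr (h _ h1)
    simpa using this

/-- if `σ` is an automorphism of `G(V)`, `W` is `k`-dimensional with
basis `α₁, …, α_k` (`2 ≤ k ≤ n-1`) and `σ⟨αᵢ⟩ = ⟨βᵢ⟩`, then
`σ(W) = ⟨β₁, …, β_k⟩`. -/
theorem stmt_5 (F V : Type*) [Field F] [Fintype F] [AddCommGroup V] [Module F V]
    [FiniteDimensional F V] (n : ℕ) (hn : 3 ≤ n) (hdim : Module.finrank F V = n)
    (σ : sumGraph F V ≃g sumGraph F V)
    (k : ℕ) (hk1 : 2 ≤ k) (hk2 : k ≤ n - 1)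
    (W : Submodule F V) (hW : Module.finrank F W = k)
    (α β : Fin k → V)
    (hli : LinearIndependent F α) (hspan : Submodule.span F (Set.range α) = W)
    (hσ : ∀ (i : Fin k) (h : Submodule.span F {α i} ≠ ⊥ ∧ Submodule.span F {α i} ≠ ⊤),
      (σ ⟨Submodule.span F {α i}, h⟩).1 = Submodule.span F {β i}) :
    ∀ (hWv : W ≠ ⊥ ∧ W ≠ ⊤),
      (σ ⟨W, hWv⟩).1 = Submodule.span F (Set.range β) := by
  intro hWv
  -- each span {α i} is a vertex
  have hαvert : ∀ i : Fin k, Submodule.span F {α i} ≠ ⊥ ∧ Submodule.span F {α i} ≠ ⊤ := by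
    intro i
    constructor
    · simpa [Submodule.span_singleton_eq_bot] using hli.ne_zero i
    · intro hh
      have h1 : Module.finrank F (Submodule.span F ({α i} : Set V)) = 1 :=
        finrank_span_singleton (hli.ne_zero i)
      rw [hh, finrank_top, hdim] at h1
      omega
  -- span{α i} ≤ W
  have hαW : ∀ i, Submodule.span F {α i} ≤ W := by
    intro i
    rw [← hspan]
    exact Submodule.span_mono (Set.singleton_subset_iff.mpr ⟨i, rfl⟩)
  -- span β ≤ σ W
  have hβle : ∀ i, Submodule.span F {β i} ≤ (σ ⟨W, hWv⟩).1 := by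
    intro i
    have := (sumGraph_iso_le_iff F V σ ⟨_, hαvert i⟩ ⟨W, hWv⟩).mpr (hαW i)
    rwa [hσ i (hαvert i)] at this
  have hS : Submodule.span F (Set.range β) ≤ (σ ⟨W, hWv⟩).1 := by
    rw [Submodule.span_le]
    rintro _ ⟨i, rfl⟩
    exact hβle i (Submodule.mem_span_singleton_self _)
  -- span β is a vertex
  have hSbot : Submodule.span F (Set.range β) ≠ ⊥ := by
    intro hh
    have hb : β ⟨0, by omega⟩ ∈ Submodule.span F (Set.range β) :=
      Submodule.subset_span ⟨_, rfl⟩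
    rw [hh, Submodule.mem_bot] at hb
    have := (hσ ⟨0, by omega⟩ (hαvert _))
    apply ((σ ⟨_, hαvert ⟨0, by omega⟩⟩).2.1)
    rw [this, hb, Submodule.span_singleton_eq_bot.mpr rfl]
  have hStop : Submodule.span F (Set.range β) ≠ ⊤ :=
    fun hh => (σ ⟨W, hWv⟩).2.2 (top_le_iff.mp (le_trans (le_of_eq hh.symm) hS))
  set Sv : {X : Submodule F V // X ≠ ⊥ ∧ X ≠ ⊤} := ⟨_, hSbot, hStop⟩ with hSv
  -- U := σ⁻¹ Sv  satisfies U = W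
  have hσU : σ (σ.symm Sv) = Sv := by simp
  have hUleW : (σ.symm Sv).1 ≤ W := by
    have h5 : (σ (σ.symm Sv)).1 ≤ (σ ⟨W, hWv⟩).1 := by rw [hσU]; exact hS
    exact (sumGraph_iso_le_iff F V σ (σ.symm Sv) ⟨W, hWv⟩).mp h5
  have hWleU : W ≤ (σ.symm Sv).1 := by
    rw [← hspan, Submodule.span_le]
    rintro _ ⟨i, rfl⟩
    have h6 : (σ ⟨_, hαvert i⟩).1 ≤ (σ (σ.symm Sv)).1 := by
      rw [hσU, hσ i (hαvert i)]
      exact Submodule.span_mono (Set.singleton_subset_iff.mpr ⟨i, rfl⟩)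
    have h7 := (sumGraph_iso_le_iff F V σ ⟨_, hαvert i⟩ (σ.symm Sv)).mp h6
    exact h7 (Submodule.mem_span_singleton_self _)
  have : σ.symm Sv = ⟨W, hWv⟩ := Subtype.ext (le_antisymm hUleW hWleU)
  rw [← this, hσU]
end

section
/- Let σ be an automorphism of G(V), let W be a k-dimensional subspace of V with 2 ≤ k ≤ n−1, and let α be a nonzero vector of V. If ⟨α⟩ ⊆ W, then σ(⟨α⟩) ⊆ σ(W), where ⟨α⟩ denotes the 1-dimensional subspace spanned by α. -/
/-- If every vertex adjacent to `A` is adjacent to `B`, then `A ≤ B`. -/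
theorem sumGraph_nbhd_le {F V : Type*} [Field F] [AddCommGroup V] [Module F V]
    (A B : {W : Submodule F V // W ≠ ⊥ ∧ W ≠ ⊤})
    (h : ∀ U, (sumGraph F V).Adj U A → (sumGraph F V).Adj U B) :
    A.1 ≤ B.1 := by
  by_contra hle
  rw [SetLike.not_le_iff_exists] at hle
  obtain ⟨a, haA, haB⟩ := hle
  obtain ⟨C, hC⟩ := Submodule.exists_isCompl (B.1 ⊔ Submodule.span F {a})
  set H : Submodule F V := B.1 ⊔ C with hHdef
  have haH : a ∉ H := by
    intro hmem
    rw [Submodule.mem_sup] at hmem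
    obtain ⟨b, hb, c, hc, habc⟩ := hmem
    have hc2 : c ∈ (B.1 ⊔ Submodule.span F {a}) ⊓ C := by
      refine ⟨?_, hc⟩
      have : c = a - b := by rw [← habc]; abel
      rw [this]
      exact Submodule.sub_mem _ (Submodule.mem_sup_right (Submodule.mem_span_singleton_self a))
        (Submodule.mem_sup_left hb)
    rw [hC.inf_eq_bot] at hc2
    simp only [Submodule.mem_bot] at hc2
    subst hc2
    rw [add_zero] at habc
    exact haB (habc ▸ hb)
  have hHtop : H ⊔ Submodule.span F {a} = ⊤ := by
    rw [hHdef, sup_assoc, sup_comm C _, ← sup_assoc]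
    exact hC.sup_eq_top
  -- complement of A ⊓ H inside H
  obtain ⟨q, hq⟩ := Submodule.exists_isCompl ((A.1 ⊓ H).comap H.subtype)
  set U : Submodule F V := q.map H.subtype with hUdef
  have hUH : U ≤ H := by
    rw [hUdef]
    exact Submodule.map_subtype_le H q
  have hUK : U ⊔ (A.1 ⊓ H) = H := by
    have := congrArg (Submodule.map H.subtype) hq.sup_eq_top
    rwa [Submodule.map_sup, Submodule.map_comap_subtype, Submodule.map_subtype_top,
      inf_of_le_right (inf_le_right : A.1 ⊓ H ≤ H), sup_comm] at this
  have hUA_top : U ⊔ A.1 = ⊤ := by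
    have h2 : H ⊔ Submodule.span F {a} ≤ U ⊔ A.1 := by
      refine sup_le ?_ ?_
      · rw [← hUK]
        exact sup_le le_sup_left (le_trans inf_le_left le_sup_right)
      · exact le_trans (Submodule.span_le.mpr (by simpa using haA)) le_sup_right
    rw [hHtop] at h2
    exact le_antisymm le_top h2
  have hUne_top : U ≠ ⊤ := fun h' => haH (hUH (h' ▸ Submodule.mem_top))
  have hUne_bot : U ≠ ⊥ := by
    intro h'
    rw [h', bot_sup_eq] at hUA_top
    exact A.2.2 hUA_top
  have hUneA : U ≠ A.1 := by
    intro h'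
    exact haH (hUH (h' ▸ haA))
  have hadj := h ⟨U, hUne_bot, hUne_top⟩ ⟨fun h' => hUneA (congrArg Subtype.val h'), hUA_top⟩
  have : U ⊔ B.1 ≤ H := sup_le hUH le_sup_left
  rw [hadj.2] at this
  exact haH (this Submodule.mem_top)


/-- if `σ` is an automorphism of `G(V)`, `W` is a `k`-dimensional
subspace (`2 ≤ k ≤ n-1`), `α ≠ 0` and `⟨α⟩ ⊆ W`, then `σ(⟨α⟩) ⊆ σ(W)`. -/
theorem stmt_6 (F V : Type*) [Field F] [Fintype F] [AddCommGroup V] [Module F V]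
    [FiniteDimensional F V] (n : ℕ) (hn : 3 ≤ n) (hdim : Module.finrank F V = n)
    (σ : sumGraph F V ≃g sumGraph F V)
    (k : ℕ) (hk1 : 2 ≤ k) (hk2 : k ≤ n - 1)
    (W : Submodule F V) (hW : Module.finrank F W = k)
    (α : V) (hα : α ≠ 0) (hle : Submodule.span F {α} ≤ W) :
    ∀ (hαv : Submodule.span F {α} ≠ ⊥ ∧ Submodule.span F {α} ≠ ⊤)
      (hWv : W ≠ ⊥ ∧ W ≠ ⊤),
      (σ ⟨Submodule.span F {α}, hαv⟩).1 ≤ (σ ⟨W, hWv⟩).1 := by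
  intro hαv hWv
  set A : {W : Submodule F V // W ≠ ⊥ ∧ W ≠ ⊤} := ⟨Submodule.span F {α}, hαv⟩
  set B : {W : Submodule F V // W ≠ ⊥ ∧ W ≠ ⊤} := ⟨W, hWv⟩
  apply sumGraph_nbhd_le
  intro U hU
  have hU' : (sumGraph F V).Adj (σ.symm U) A := by
    have := σ.map_rel_iff (a := σ.symm U) (b := A)
    rw [σ.apply_symm_apply] at this
    exact this.mp hU
  have hUB : (sumGraph F V).Adj (σ.symm U) B := by
    refine ⟨?_, ?_⟩
    · intro h'
      have : (σ.symm U).1 ⊔ A.1 = B.1 := by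
        rw [h']; exact sup_eq_left.mpr hle
      rw [hU'.2] at this
      exact hWv.2 this.symm
    · have h2 : (σ.symm U).1 ⊔ A.1 ≤ (σ.symm U).1 ⊔ B.1 := sup_le_sup_left hle _
      rw [hU'.2] at h2
      exact le_antisymm le_top h2
  have := σ.map_rel_iff (a := σ.symm U) (b := B)
  rw [σ.apply_symm_apply] at this
  exact this.mpr hUB
end

section
/- Let σ be an automorphism of G(V), let W be a k-dimensional subspace of V with 2 ≤ k ≤ n−1, and let α be a nonzero vector of V. If ⟨α⟩ is not contained in W, then σ(⟨α⟩) is not contained in σ(W), where ⟨α⟩ denotes the 1-dimensional subspace spanned by α. -/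
/-- if `σ` is an automorphism of `G(V)`, `W` is a `k`-dimensional
subspace (`2 ≤ k ≤ n-1`), `α ≠ 0` and `⟨α⟩ ⊄ W`, then `σ(⟨α⟩) ⊄ σ(W)`. -/
theorem stmt_7 (F V : Type*) [Field F] [Fintype F] [AddCommGroup V] [Module F V]
    [FiniteDimensional F V] (n : ℕ) (hn : 3 ≤ n) (hdim : Module.finrank F V = n)
    (σ : sumGraph F V ≃g sumGraph F V)
    (k : ℕ) (hk1 : 2 ≤ k) (hk2 : k ≤ n - 1)
    (W : Submodule F V) (hW : Module.finrank F W = k)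
    (α : V) (hα : α ≠ 0) (hle : ¬ Submodule.span F {α} ≤ W) :
    ∀ (hαv : Submodule.span F {α} ≠ ⊥ ∧ Submodule.span F {α} ≠ ⊤)
      (hWv : W ≠ ⊥ ∧ W ≠ ⊤),
      ¬ (σ ⟨Submodule.span F {α}, hαv⟩).1 ≤ (σ ⟨W, hWv⟩).1 := by
  intro hαv hWv h
  have hαW : α ∉ W := fun hm => hle (by rwa [Submodule.span_singleton_le_iff_mem])
  obtain ⟨C, hC⟩ := Submodule.exists_isCompl (W ⊔ Submodule.span F {α})
  set H : Submodule F V := W ⊔ C with hHdef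
  have hαH : α ∉ H := by
    intro hmem
    rcases Submodule.mem_sup.mp hmem with ⟨w, hw, c, hc, hwc⟩
    have hcU : c ∈ (W ⊔ Submodule.span F {α}) ⊓ C := by
      refine ⟨?_, hc⟩
      have hce : c = α - w := eq_sub_of_add_eq' hwc
      rw [hce]
      exact Submodule.sub_mem _
        (Submodule.mem_sup_right (Submodule.mem_span_singleton_self α))
        (Submodule.mem_sup_left hw)
    rw [hC.inf_eq_bot] at hcU
    have hc0 : c = 0 := hcU
    apply hαW
    rw [← hwc, hc0, add_zero]
    exact hw
  have hsup : H ⊔ Submodule.span F {α} = ⊤ := by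
    rw [hHdef, sup_right_comm]
    exact hC.sup_eq_top
  have hWH : W ≤ H := le_sup_left
  have hHv : H ≠ ⊥ ∧ H ≠ ⊤ := by
    constructor
    · intro hb
      exact hWv.1 (le_bot_iff.mp (hb ▸ hWH))
    · intro ht
      exact hαH (ht ▸ Submodule.mem_top)
  have adj1 : (sumGraph F V).Adj ⟨Submodule.span F {α}, hαv⟩ ⟨H, hHv⟩ := by
    constructor
    · intro he
      apply hαH
      have : Submodule.span F {α} = H := congrArg Subtype.val he
      exact this ▸ Submodule.mem_span_singleton_self α
    · rw [sup_comm]; exact hsup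
  have adj2 := σ.map_adj_iff.mpr adj1
  have hsupσ : (σ ⟨W, hWv⟩).1 ⊔ (σ ⟨H, hHv⟩).1 = ⊤ := by
    refine top_le_iff.mp ?_
    calc (⊤ : Submodule F V) = (σ ⟨Submodule.span F {α}, hαv⟩).1 ⊔ (σ ⟨H, hHv⟩).1 :=
          adj2.2.symm
      _ ≤ (σ ⟨W, hWv⟩).1 ⊔ (σ ⟨H, hHv⟩).1 := sup_le_sup_right h _
  by_cases heq : σ ⟨W, hWv⟩ = σ ⟨H, hHv⟩
  · rw [← heq, sup_idem] at hsupσ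
    exact (σ ⟨W, hWv⟩).2.2 hsupσ
  · have adjσ : (sumGraph F V).Adj (σ ⟨W, hWv⟩) (σ ⟨H, hHv⟩) := ⟨heq, hsupσ⟩
    have adjWH := σ.map_adj_iff.mp adjσ
    have : W ⊔ H = ⊤ := adjWH.2
    rw [sup_eq_right.mpr hWH] at this
    exact hHv.2 this
end

section
/- Let σ be an automorphism of G(V) such that σ(⟨e_i⟩) = ⟨e_i⟩ for every 1 ≤ i ≤ n. Let α = ∑_{i=1}^n a_i e_i and β = ∑_{i=1}^n b_i e_i be nonzero vectors of V with σ(⟨α⟩) = ⟨β⟩. Then for every 1 ≤ i ≤ n, a_i = 0 if and only if b_i = 0. -/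
set_option linter.unusedSectionVars false

section aux
open Submodule Module

variable {F V : Type*} [Field F] [AddCommGroup V] [Module F V]
  [FiniteDimensional F V] {n : ℕ}

/-- The hyperplane spanned by all basis vectors except `e i`. -/
noncomputable def hypW (e : Basis (Fin n) F V) (i : Fin n) : Submodule F V :=
  Submodule.span F (e '' {j | j ≠ i})

variable (e : Basis (Fin n) F V) (i : Fin n)

lemma mem_hypW {j : Fin n} (hj : j ≠ i) : e j ∈ hypW e i :=
  Submodule.subset_span ⟨j, hj, rfl⟩

lemma finrank_hypW : Module.finrank F (hypW e i) = n - 1 := by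
  have h1 : (e '' {j | j ≠ i}) = Set.range (fun j : {j : Fin n | j ≠ i} => e j) :=
    Set.image_eq_range _ _
  have h2 : LinearIndependent F (fun j : {j : Fin n | j ≠ i} => e j) :=
    e.linearIndependent.comp _ Subtype.val_injective
  rw [hypW, h1, finrank_span_eq_card h2]
  simp [Fintype.card_subtype_compl, Finset.filter_ne', Finset.card_erase_of_mem]

lemma mem_hypW_of_coord_zero (c : Fin n → F) (hci : c i = 0) :
    (∑ j, c j • e j) ∈ hypW e i := by
  refine Submodule.sum_mem _ fun j _ => ?_
  by_cases hj : j = i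
  · subst hj; rw [hci, zero_smul]; exact Submodule.zero_mem _
  · exact Submodule.smul_mem _ _ (mem_hypW e i hj)

lemma sup_hypW_eq_top (c : Fin n → F) (hci : c i ≠ 0) :
    Submodule.span F {∑ j, c j • e j} ⊔ hypW e i = ⊤ := by
  rw [eq_top_iff, ← e.span_eq, Submodule.span_le]
  rintro x ⟨j, rfl⟩
  by_cases hj : j = i
  · rw [hj]
    have hv : (∑ j, c j • e j) ∈ Submodule.span F {∑ j, c j • e j} ⊔ hypW e i :=
      Submodule.mem_sup_left (Submodule.mem_span_singleton_self _)
    have hrest : (∑ j ∈ Finset.univ.erase i, c j • e j) ∈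
        Submodule.span F {∑ j, c j • e j} ⊔ hypW e i :=
      Submodule.sum_mem _ fun j hj =>
        Submodule.mem_sup_right (Submodule.smul_mem _ _ (mem_hypW e i (Finset.ne_of_mem_erase hj)))
    have hsub : c i • e i ∈ Submodule.span F {∑ j, c j • e j} ⊔ hypW e i := by
      have := Submodule.sub_mem _ hv hrest
      rwa [show (∑ j, c j • e j) - (∑ j ∈ Finset.univ.erase i, c j • e j) = c i • e i by
        rw [← Finset.add_sum_erase _ _ (Finset.mem_univ i)]; abel] at this
    have := Submodule.smul_mem _ (c i)⁻¹ hsub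
    rwa [inv_smul_smul₀ hci] at this
  · exact Submodule.mem_sup_right (mem_hypW e i hj)

lemma eq_hypW (hdim : Module.finrank F V = n) (hn : 3 ≤ n) (U : Submodule F V)
    (hUtop : U ≠ ⊤)
    (hadj : U ⊔ Submodule.span F {e i} = ⊤)
    (hnadj : ∀ j, j ≠ i → U = Submodule.span F {e j} ∨ U ⊔ Submodule.span F {e j} ≠ ⊤) :
    U = hypW e i := by
  have htopr : Module.finrank F (⊤ : Submodule F V) = n := by rw [finrank_top, hdim]
  have hU1 : Module.finrank F U = n - 1 := by
    have hle : Module.finrank F U < n := by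
      have := Submodule.finrank_lt_finrank_of_lt (lt_top_iff_ne_top.mpr hUtop)
      omega
    have hge : n ≤ Module.finrank F U + 1 := by
      have h1 : Module.finrank F (Submodule.span F ({e i} : Set V)) = 1 :=
        finrank_span_singleton (e.ne_zero i)
      have h2 := Submodule.finrank_sup_add_finrank_inf_eq U (Submodule.span F {e i})
      rw [hadj, h1, htopr] at h2
      omega
    omega
  have hmem : ∀ j, j ≠ i → e j ∈ U := by
    intro j hj
    by_contra hnot
    have hlt : U < U ⊔ Submodule.span F {e j} := by
      refine lt_of_le_of_ne le_sup_left fun h => hnot ?_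
      rw [h]; exact Submodule.mem_sup_right (Submodule.mem_span_singleton_self _)
    have hge : n ≤ Module.finrank F ↥(U ⊔ Submodule.span F {e j}) := by
      have := Submodule.finrank_lt_finrank_of_lt hlt; omega
    have hle : Module.finrank F ↥(U ⊔ Submodule.span F {e j}) ≤ n := by
      have := Submodule.finrank_le (U ⊔ Submodule.span F {e j}); omega
    have htop : U ⊔ Submodule.span F {e j} = ⊤ :=
      Submodule.eq_top_of_finrank_eq (by rw [hdim]; omega)
    rcases hnadj j hj with h | h
    · exact hnot (h ▸ Submodule.mem_span_singleton_self _)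
    · exact h htop
  have hWle : hypW e i ≤ U := by
    rw [hypW, Submodule.span_le]
    rintro x ⟨j, hj, rfl⟩
    exact hmem j hj
  exact (Submodule.eq_of_le_of_finrank_le hWle (by rw [finrank_hypW, hU1])).symm

lemma span_sup_hypW : Submodule.span F {e i} ⊔ hypW e i = ⊤ := by
  rw [eq_top_iff, ← e.span_eq, Submodule.span_le]
  rintro x ⟨j, rfl⟩
  by_cases hj : j = i
  · rw [hj]; exact Submodule.mem_sup_left (Submodule.mem_span_singleton_self _)
  · exact Submodule.mem_sup_right (mem_hypW e i hj)

lemma hypW_ne_top (hdim : Module.finrank F V = n) (hn : 3 ≤ n) : hypW e i ≠ ⊤ := by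
  intro h
  have := finrank_hypW e i
  rw [h, finrank_top, hdim] at this
  omega

lemma hypW_ne_bot (hn : 3 ≤ n) : hypW e i ≠ ⊥ := by
  intro h
  have := finrank_hypW e i
  rw [h, finrank_bot] at this
  omega

lemma span_ne_hypW (hn : 3 ≤ n) (v : V) (hv : v ≠ 0) :
    Submodule.span F {v} ≠ hypW e i := by
  intro h
  have h1 : Module.finrank F (Submodule.span F ({v} : Set V)) = 1 :=
    finrank_span_singleton hv
  rw [h, finrank_hypW] at h1
  omega

lemma span_ne_top (hdim : Module.finrank F V = n) (hn : 3 ≤ n) (v : V) :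
    Submodule.span F {v} ≠ ⊤ := by
  intro h
  have h1 : Module.finrank F (Submodule.span F ({v} : Set V)) ≤ 1 := by
    refine (finrank_span_le_card _).trans ?_
    simp
  rw [h, finrank_top, hdim] at h1
  omega

lemma coord_char (hdim : Module.finrank F V = n) (hn : 3 ≤ n) (c : Fin n → F)
    (hv : (∑ j, c j • e j) ≠ 0) :
    (Submodule.span F {∑ j, c j • e j} ≠ hypW e i ∧
      Submodule.span F {∑ j, c j • e j} ⊔ hypW e i = ⊤) ↔ c i ≠ 0 := by
  constructor
  · rintro ⟨-, htop⟩ hci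
    have hmem := mem_hypW_of_coord_zero e i c hci
    rw [sup_eq_right.mpr (Submodule.span_le.mpr (Set.singleton_subset_iff.mpr hmem))] at htop
    exact hypW_ne_top e i hdim hn htop
  · intro hci
    exact ⟨span_ne_hypW e i hn _ hv, sup_hypW_eq_top e i c hci⟩

end aux

/-- Claim 1: if the automorphism `σ` fixes every `⟨eᵢ⟩` and
`σ(⟨∑ aᵢeᵢ⟩) = ⟨∑ bᵢeᵢ⟩` for nonzero vectors `∑ aᵢeᵢ`, `∑ bᵢeᵢ`,
then `aᵢ = 0 ↔ bᵢ = 0` for every `i`. -/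
theorem stmt_9 (F V : Type*) [Field F] [Fintype F] [AddCommGroup V] [Module F V]
    [FiniteDimensional F V] (n : ℕ) (hn : 3 ≤ n) (hdim : Module.finrank F V = n)
    (e : Module.Basis (Fin n) F V)
    (σ : sumGraph F V ≃g sumGraph F V)
    (hfix : ∀ (i : Fin n) (h : Submodule.span F {e i} ≠ ⊥ ∧ Submodule.span F {e i} ≠ ⊤),
      (σ ⟨Submodule.span F {e i}, h⟩).1 = Submodule.span F {e i})
    (a b : Fin n → F)
    (ha : (∑ i, a i • e i) ≠ 0) (hb : (∑ i, b i • e i) ≠ 0)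
    (hσ : ∀ (h : Submodule.span F {∑ i, a i • e i} ≠ ⊥ ∧
        Submodule.span F {∑ i, a i • e i} ≠ ⊤),
      (σ ⟨Submodule.span F {∑ i, a i • e i}, h⟩).1 =
        Submodule.span F {∑ i, b i • e i}) :
    ∀ i : Fin n, a i = 0 ↔ b i = 0 := by
  intro i
  -- vertices
  have hEprop : ∀ j : Fin n, Submodule.span F {e j} ≠ ⊥ ∧ Submodule.span F {e j} ≠ ⊤ :=
    fun j => ⟨by simp [Submodule.span_singleton_eq_bot, e.ne_zero j],
      span_ne_top hdim hn (e j)⟩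
  set vE : Fin n → {W : Submodule F V // W ≠ ⊥ ∧ W ≠ ⊤} :=
    fun j => ⟨Submodule.span F {e j}, hEprop j⟩ with hvE
  set vW : {W : Submodule F V // W ≠ ⊥ ∧ W ≠ ⊤} :=
    ⟨hypW e i, hypW_ne_bot e i hn, hypW_ne_top e i hdim hn⟩ with hvW
  have hAprop : Submodule.span F {∑ i, a i • e i} ≠ ⊥ ∧
      Submodule.span F {∑ i, a i • e i} ≠ ⊤ :=
    ⟨by simpa [Submodule.span_singleton_eq_bot] using ha,
      span_ne_top hdim hn _⟩
  set vA : {W : Submodule F V // W ≠ ⊥ ∧ W ≠ ⊤} :=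
    ⟨Submodule.span F {∑ i, a i • e i}, hAprop⟩ with hvA
  have hfixv : ∀ j, σ (vE j) = vE j := fun j => Subtype.ext (hfix j (hEprop j))
  -- σ fixes the hyperplane vertex vW
  have hadjWE : (sumGraph F V).Adj vW (vE i) := by
    constructor
    · intro h
      exact span_ne_hypW e i hn (e i) (e.ne_zero i) (congrArg Subtype.val h).symm
    · rw [sup_comm]; exact span_sup_hypW e i
  have h1 : (sumGraph F V).Adj (σ vW) (vE i) := by
    rw [← hfixv i]; exact σ.map_adj_iff.mpr hadjWE
  have h2 : ∀ j, j ≠ i → ¬ (sumGraph F V).Adj (σ vW) (vE j) := by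
    intro j hj hadj
    rw [← hfixv j] at hadj
    have := σ.map_adj_iff.mp hadj
    have hsup := this.2
    rw [sup_eq_left.mpr (Submodule.span_le.mpr
      (Set.singleton_subset_iff.mpr (mem_hypW e i hj)))] at hsup
    exact hypW_ne_top e i hdim hn hsup
  have hUW : (σ vW).1 = hypW e i := by
    refine eq_hypW e i hdim hn _ (σ vW).2.2 h1.2 ?_
    intro j hj
    by_cases hej : σ vW = vE j
    · left; exact congrArg Subtype.val hej
    · right; intro hsup; exact h2 j hj ⟨hej, hsup⟩
  -- transport adjacency of ⟨α⟩ with vW through σ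
  have hσA : (σ vA).1 = Submodule.span F {∑ i, b i • e i} := hσ hAprop
  have key : a i ≠ 0 ↔ b i ≠ 0 := by
    rw [← coord_char e i hdim hn a ha, ← coord_char e i hdim hn b hb]
    have hiff1 : (sumGraph F V).Adj vA vW ↔
        (Submodule.span F {∑ i, a i • e i} ≠ hypW e i ∧
          Submodule.span F {∑ i, a i • e i} ⊔ hypW e i = ⊤) := by
      constructor
      · rintro ⟨hne, hsup⟩
        exact ⟨fun h => hne (Subtype.ext h), hsup⟩
      · rintro ⟨hne, hsup⟩
        exact ⟨fun h => hne (congrArg Subtype.val h), hsup⟩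
    have hiff2 : (sumGraph F V).Adj (σ vA) (σ vW) ↔
        (Submodule.span F {∑ i, b i • e i} ≠ hypW e i ∧
          Submodule.span F {∑ i, b i • e i} ⊔ hypW e i = ⊤) := by
      constructor
      · rintro ⟨hne, hsup⟩
        rw [hσA, hUW] at hsup
        refine ⟨fun h => hne (Subtype.ext ?_), hsup⟩
        rw [hσA, hUW]; exact h
      · rintro ⟨hne, hsup⟩
        refine ⟨fun h => hne ?_, ?_⟩
        · rw [← hσA, ← hUW, h]
        · rw [hσA, hUW]; exact hsup
    rw [← hiff1, ← hiff2]
    exact (σ.map_adj_iff).symm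
  exact not_iff_not.mp key
end

section
/- Let σ be an automorphism of G(V) such that σ(⟨e_i⟩) = ⟨e_i⟩ for every 1 ≤ i ≤ n, and let f_{ij} : F_q → F_q (for 1 ≤ i < j ≤ n) be functions such that for every 1 ≤ i ≤ n and all scalars a_{i+1}, …, a_n ∈ F_q, σ(⟨e_i + ∑_{j=i+1}^n a_j e_j⟩) = ⟨e_i + ∑_{j=i+1}^n f_{ij}(a_j) e_j⟩. Then for all 2 ≤ i < j ≤ n and all a, b ∈ F_q, f_{1j}(ab) = f_{1i}(a) · f_{ij}(b). -/
set_option linter.unusedSectionVars false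

section Aux
variable {F V : Type*} [Field F] [AddCommGroup V] [Module F V]

lemma aux_ker_sup_span_eq_top (φ : V →ₗ[F] F) (v : V) (hv : φ v ≠ 0) :
    LinearMap.ker φ ⊔ Submodule.span F {v} = ⊤ := by
  rw [eq_top_iff]
  intro w _
  rw [Submodule.mem_sup]
  refine ⟨w - (φ w / φ v) • v, ?_, (φ w / φ v) • v,
    Submodule.smul_mem _ _ (Submodule.mem_span_singleton_self v), by abel⟩
  simp only [LinearMap.mem_ker, map_sub, map_smul, smul_eq_mul,
    div_mul_cancel₀ _ hv, sub_self]

variable [FiniteDimensional F V] {n : ℕ}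

lemma aux_finrank_of_sup (hn : 3 ≤ n) (hdim : Module.finrank F V = n)
    (W : Submodule F V) (hW : W ≠ ⊤) (v : V)
    (h : W ⊔ Submodule.span F {v} = ⊤) :
    Module.finrank F W = n - 1 := by
  have h1 : Module.finrank F W < n := by
    rw [← hdim]; exact Submodule.finrank_lt hW
  have hv : v ≠ 0 := by
    rintro rfl
    rw [Submodule.span_zero_singleton, sup_bot_eq] at h
    exact hW h
  have h2 := Submodule.finrank_sup_add_finrank_inf_eq W (Submodule.span F {v})
  rw [h, finrank_top, hdim, finrank_span_singleton hv] at h2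
  omega

lemma aux_mem_of_sup_ne_top (hn : 3 ≤ n) (hdim : Module.finrank F V = n)
    (W : Submodule F V) (hW : Module.finrank F W = n - 1)
    (v : V) (h : W ⊔ Submodule.span F {v} ≠ ⊤) : v ∈ W := by
  have hle : W ≤ W ⊔ Submodule.span F {v} := le_sup_left
  have h2 : Module.finrank F (W ⊔ Submodule.span F {v} : Submodule F V) < n := by
    rw [← hdim]; exact Submodule.finrank_lt h
  have heq := Submodule.eq_of_le_of_finrank_le hle (by omega)
  exact heq ▸ (le_sup_right (a := W)) (Submodule.mem_span_singleton_self v)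

lemma aux_span_ne_top (hn : 3 ≤ n) (hdim : Module.finrank F V = n) (v : V) :
    Submodule.span F {v} ≠ ⊤ := by
  intro h
  have h1 : Module.finrank F (Submodule.span F {v}) ≤ 1 := by
    rcases eq_or_ne v 0 with rfl | hv
    · rw [Submodule.span_zero_singleton, finrank_bot]; omega
    · rw [finrank_span_singleton hv]
  rw [h, finrank_top, hdim] at h1
  omega

lemma aux_coord_sum (e : Module.Basis (Fin n) F V) (k : Fin n) (s : Finset (Fin n))
    (c : Fin n → F) :
    e.coord k (∑ m ∈ s, c m • e m) = if k ∈ s then c k else 0 := by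
  rw [map_sum, Finset.sum_congr rfl (fun m _ => ?_), Finset.sum_ite_eq' s k c]
  rw [map_smul, Module.Basis.coord_apply, Module.Basis.repr_self, smul_eq_mul, Finsupp.single_apply]
  simp only [mul_ite, mul_one, mul_zero]

lemma aux_coord_basis (e : Module.Basis (Fin n) F V) (k m : Fin n) :
    e.coord k (e m) = if m = k then 1 else 0 := by
  rw [Module.Basis.coord_apply, Module.Basis.repr_self, Finsupp.single_apply]

end Aux


/-- Claim 3(i): if the automorphism `σ` fixes every `⟨eᵢ⟩` and the
functions `f_{ij}` describe the action of `σ` as in Claim 2, then for all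
`1 < i < j` (indices `0`-based: `0 < i < j`) and all `a, b`,
`f_{1j}(ab) = f_{1i}(a)·f_{ij}(b)`. -/
theorem stmt_11 (F V : Type*) [Field F] [Fintype F] [AddCommGroup V] [Module F V]
    [FiniteDimensional F V] (n : ℕ) (hn : 3 ≤ n) (hdim : Module.finrank F V = n)
    (e : Module.Basis (Fin n) F V)
    (σ : sumGraph F V ≃g sumGraph F V)
    (hfix : ∀ (i : Fin n) (h : Submodule.span F {e i} ≠ ⊥ ∧ Submodule.span F {e i} ≠ ⊤),
      (σ ⟨Submodule.span F {e i}, h⟩).1 = Submodule.span F {e i})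
    (f : Fin n → Fin n → F → F)
    (hf : ∀ (i : Fin n) (a : Fin n → F)
      (h : Submodule.span F {e i + ∑ j ∈ Finset.Ioi i, a j • e j} ≠ ⊥ ∧
           Submodule.span F {e i + ∑ j ∈ Finset.Ioi i, a j • e j} ≠ ⊤),
      (σ ⟨Submodule.span F {e i + ∑ j ∈ Finset.Ioi i, a j • e j}, h⟩).1 =
        Submodule.span F {e i + ∑ j ∈ Finset.Ioi i, f i j (a j) • e j}) :
    ∀ i j : Fin n, (⟨0, by omega⟩ : Fin n) < i → i < j → ∀ a b : F,
      f ⟨0, by omega⟩ j (a * b) = f ⟨0, by omega⟩ i a * f i j b := by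
  intro i j hi hij a b
  set i0 : Fin n := ⟨0, by omega⟩ with hi0def
  show f i0 j (a * b) = f i0 i a * f i j b
  have hi0j : i0 < j := lt_trans hi hij
  have hne_i0i : i0 ≠ i := ne_of_lt hi
  have hne_i0j : i0 ≠ j := ne_of_lt hi0j
  have hne_ij : i ≠ j := ne_of_lt hij
  -- the functional ψ and hyperplane H
  set ψ : V →ₗ[F] F := e.coord j - b • e.coord i with hψdef
  have hψ : ∀ v, ψ v = e.coord j v - b * e.coord i v := fun v => rfl
  have hψej : ψ (e j) = 1 := by
    rw [hψ, aux_coord_basis, aux_coord_basis]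
    simp [hne_ij.symm]
  set H : Submodule F V := LinearMap.ker ψ with hHdef
  have hHtop : H ≠ ⊤ := by
    intro h
    have : ψ (e j) = 0 := by
      have : e j ∈ H := by rw [h]; trivial
      exact this
    rw [hψej] at this
    exact one_ne_zero this
  have hHbot : H ≠ ⊥ := by
    intro h
    have hmem : e i0 ∈ H := by
      show ψ (e i0) = 0
      rw [hψ, aux_coord_basis, aux_coord_basis]
      simp [hne_i0i, hne_i0j]
    rw [h, Submodule.mem_bot] at hmem
    exact e.ne_zero i0 hmem
  have hHsup : H ⊔ Submodule.span F {e j} = ⊤ :=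
    aux_ker_sup_span_eq_top ψ (e j) (by rw [hψej]; exact one_ne_zero)
  have hHrank : Module.finrank F H = n - 1 :=
    aux_finrank_of_sup hn hdim H hHtop (e j) hHsup
  set vH : {W : Submodule F V // W ≠ ⊥ ∧ W ≠ ⊤} := ⟨H, hHbot, hHtop⟩ with hvHdef
  set K : Submodule F V := (σ vH).1 with hKdef
  have hKtop : K ≠ ⊤ := (σ vH).2.2
  -- basic vertex facts for spans of single nonzero vectors
  have hvert : ∀ v : V, v ≠ 0 →
      Submodule.span F {v} ≠ ⊥ ∧ Submodule.span F {v} ≠ ⊤ := by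
    intro v hv
    exact ⟨by rwa [ne_eq, Submodule.span_singleton_eq_bot], aux_span_ne_top hn hdim v⟩
  have hvertE : ∀ k : Fin n,
      Submodule.span F {e k} ≠ ⊥ ∧ Submodule.span F {e k} ≠ ⊤ :=
    fun k => hvert (e k) (e.ne_zero k)
  -- adjacency with ⟨e j⟩ gives that K is a "hyperplane"
  have hKsup : K ⊔ Submodule.span F {e j} = ⊤ := by
    have hadj : (sumGraph F V).Adj vH ⟨Submodule.span F {e j}, hvertE j⟩ := by
      constructor
      · intro hEq
        have h2 : H = Submodule.span F {e j} := congrArg Subtype.val hEq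
        have h1 : Module.finrank F (Submodule.span F {e j}) = 1 :=
          finrank_span_singleton (e.ne_zero j)
        rw [← h2, hHrank] at h1
        omega
      · exact hHsup
    have := (σ.map_adj_iff (v := vH) (w := ⟨Submodule.span F {e j}, hvertE j⟩)).mpr hadj
    have h2 := this.2
    rwa [hfix j (hvertE j)] at h2
  have hKrank : Module.finrank F K = n - 1 :=
    aux_finrank_of_sup hn hdim K hKtop (e j) hKsup
  -- key: lines inside H have σ-images whose sup with K is not ⊤
  have hkey : ∀ (v : V) (hv : v ≠ 0), v ∈ H → (σ ⟨Submodule.span F {v}, hvert v hv⟩).1 ∈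
      ({X : Submodule F V | K ⊔ X ≠ ⊤} : Set (Submodule F V)) := by
    intro v hv hvH
    have hle : Submodule.span F {v} ≤ H := by
      rw [Submodule.span_le, Set.singleton_subset_iff]; exact hvH
    have hneH : (⟨Submodule.span F {v}, hvert v hv⟩ :
        {W : Submodule F V // W ≠ ⊥ ∧ W ≠ ⊤}) ≠ vH := by
      intro hEq
      have h2 : Submodule.span F {v} = H := congrArg Subtype.val hEq
      have h1 : Module.finrank F (Submodule.span F {v}) = 1 := finrank_span_singleton hv
      rw [h2, hHrank] at h1
      omega
    have hnadj : ¬ (sumGraph F V).Adj vH ⟨Submodule.span F {v}, hvert v hv⟩ := by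
      rintro ⟨-, htop⟩
      rw [show vH.1 ⊔ Submodule.span F {v} = H from sup_eq_left.mpr hle] at htop
      exact hHtop htop
    rw [← σ.map_adj_iff] at hnadj
    intro hsup
    exact hnadj ⟨fun hEq => hneH (σ.injective hEq).symm, hsup⟩
  -- membership extraction
  have hmemK : ∀ (v : V) (hv : v ≠ 0), v ∈ H → ∀ w : V,
      (σ ⟨Submodule.span F {v}, hvert v hv⟩).1 = Submodule.span F {w} → w ∈ K := by
    intro v hv hvH w hw
    have := hkey v hv hvH
    rw [hw] at this
    exact aux_mem_of_sup_ne_top hn hdim K hKrank w this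
  -- the basis vectors e k, k ≠ i, j, are in K
  have hekK : ∀ k : Fin n, k ≠ i → k ≠ j → e k ∈ K := by
    intro k hki hkj
    refine hmemK (e k) (e.ne_zero k) ?_ (e k) ?_
    · show ψ (e k) = 0
      rw [hψ, aux_coord_basis, aux_coord_basis]
      simp [hki, hkj]
    · have := hfix k (hvertE k)
      convert this using 3
  -- the vector w_i = σ-image generator of the line ⟨e i + b e j⟩
  set ci : Fin n → F := fun m => if m = j then b else 0 with hcidef
  set ui : V := e i + ∑ m ∈ Finset.Ioi i, ci m • e m with huidef
  set wi : V := e i + ∑ m ∈ Finset.Ioi i, f i m (ci m) • e m with hwidef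
  have hcoord_ui_i : e.coord i ui = 1 := by
    rw [huidef, map_add, aux_coord_basis, aux_coord_sum]
    simp
  have hui0 : ui ≠ 0 := by
    intro h
    rw [h, map_zero] at hcoord_ui_i
    exact one_ne_zero hcoord_ui_i.symm
  have huiH : ui ∈ H := by
    show ψ ui = 0
    rw [hψ, huidef, map_add, map_add, aux_coord_basis, aux_coord_basis,
      aux_coord_sum, aux_coord_sum]
    simp [hne_ij, Finset.mem_Ioi, hij, hcidef]
  have hwiK : wi ∈ K := by
    exact hmemK ui hui0 huiH wi (hf i ci (hvert ui hui0))
  -- the vector w0 = σ-image generator of the line ⟨e i0 + a e i + ab e j⟩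
  set c0 : Fin n → F := fun m => if m = i then a else if m = j then a * b else 0 with hc0def
  set u0 : V := e i0 + ∑ m ∈ Finset.Ioi i0, c0 m • e m with hu0def
  set w0 : V := e i0 + ∑ m ∈ Finset.Ioi i0, f i0 m (c0 m) • e m with hw0def
  have hcoord_u0_i0 : e.coord i0 u0 = 1 := by
    rw [hu0def, map_add, aux_coord_basis, aux_coord_sum]
    simp
  have hu00 : u0 ≠ 0 := by
    intro h
    rw [h, map_zero] at hcoord_u0_i0
    exact one_ne_zero hcoord_u0_i0.symm
  have hu0H : u0 ∈ H := by
    show ψ u0 = 0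
    rw [hψ, hu0def, map_add, map_add, aux_coord_basis, aux_coord_basis,
      aux_coord_sum, aux_coord_sum]
    simp [hne_i0i, hne_i0j, Finset.mem_Ioi, hi, hi0j, hc0def, hne_ij.symm]
    ring
  have hw0K : w0 ∈ K := by
    exact hmemK u0 hu00 hu0H w0 (hf i0 c0 (hvert u0 hu00))
  -- the functional φ, whose kernel is K
  set φ : V →ₗ[F] F := e.coord j - (f i j b) • e.coord i with hφdef
  have hφ : ∀ v, φ v = e.coord j v - f i j b * e.coord i v := fun v => rfl
  have hφej : φ (e j) = 1 := by
    rw [hφ, aux_coord_basis, aux_coord_basis]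
    simp [hne_ij.symm]
  have hφwi : φ wi = 0 := by
    rw [hφ, hwidef, map_add, map_add, aux_coord_basis, aux_coord_basis,
      aux_coord_sum, aux_coord_sum]
    simp [hne_ij, Finset.mem_Ioi, hij, hcidef]
  -- the subspace S
  set S : Submodule F V :=
    Submodule.span F ({wi} ∪ (e '' {k | k ≠ i ∧ k ≠ j})) with hSdef
  have hSK : S ≤ K := by
    rw [hSdef, Submodule.span_le]
    rintro x (hx | ⟨k, ⟨hki, hkj⟩, rfl⟩)
    · rw [Set.mem_singleton_iff] at hx
      rw [hx]; exact hwiK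
    · exact hekK k hki hkj
  have hSφ : S ≤ LinearMap.ker φ := by
    rw [hSdef, Submodule.span_le]
    rintro x (hx | ⟨k, ⟨hki, hkj⟩, rfl⟩)
    · rw [Set.mem_singleton_iff] at hx
      rw [hx]; exact hφwi
    · show φ (e k) = 0
      rw [hφ, aux_coord_basis, aux_coord_basis]
      simp [hki, hkj]
  have hStop : S ≠ ⊤ := by
    intro h
    have : φ (e j) = 0 := hSφ (by rw [h]; trivial)
    rw [hφej] at this
    exact one_ne_zero this
  have hwiS : wi ∈ S := Submodule.subset_span (Or.inl rfl)
  have hekS : ∀ k : Fin n, k ≠ i → k ≠ j → e k ∈ S := fun k hki hkj =>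
    Submodule.subset_span (Or.inr ⟨k, ⟨hki, hkj⟩, rfl⟩)
  have hSsup : S ⊔ Submodule.span F {e j} = ⊤ := by
    have hejT : e j ∈ S ⊔ Submodule.span F {e j} :=
      (le_sup_right (a := S)) (Submodule.mem_span_singleton_self (e j))
    have hall : ∀ k : Fin n, e k ∈ S ⊔ Submodule.span F {e j} := by
      intro k
      by_cases hkj : k = j
      · rw [hkj]; exact hejT
      by_cases hki : k = i
      · subst hki
        have hsum : (∑ m ∈ Finset.Ioi k, f k m (ci m) • e m) ∈
            S ⊔ Submodule.span F {e j} := by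
          refine Submodule.sum_mem _ (fun m hm => Submodule.smul_mem _ _ ?_)
          rw [Finset.mem_Ioi] at hm
          by_cases hmj : m = j
          · rw [hmj]; exact hejT
          · exact (le_sup_left (b := Submodule.span F {e j}))
              (hekS m (ne_of_gt hm) hmj)
        have : e k = wi - ∑ m ∈ Finset.Ioi k, f k m (ci m) • e m := by
          rw [hwidef]; abel
        rw [this]
        exact sub_mem ((le_sup_left (b := Submodule.span F {e j})) hwiS) hsum
      · exact (le_sup_left (b := Submodule.span F {e j})) (hekS k hki hkj)
    rw [eq_top_iff, ← e.span_eq, Submodule.span_le]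
    rintro x ⟨k, rfl⟩
    exact hall k
  have hSrank : Module.finrank F S = n - 1 :=
    aux_finrank_of_sup hn hdim S hStop (e j) hSsup
  have hSeqK : S = K :=
    Submodule.eq_of_le_of_finrank_le hSK (by rw [hSrank, hKrank])
  -- conclude
  have hw0φ : φ w0 = 0 := hSφ (hSeqK ▸ hw0K)
  rw [hφ, hw0def, map_add, map_add, aux_coord_basis, aux_coord_basis,
    aux_coord_sum, aux_coord_sum] at hw0φ
  simp only [hne_i0i, hne_i0j, if_false, Finset.mem_Ioi, hi, hi0j, if_true,
    zero_add, hc0def] at hw0φ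
  rw [if_neg (Ne.symm hne_ij), sub_eq_zero] at hw0φ
  rw [hw0φ, mul_comm]
end

section
/- Let σ be an automorphism of G(V) such that σ(⟨α⟩) = ⟨α⟩ for every nonzero vector α ∈ V, i.e. σ fixes every 1-dimensional subspace of V. Then σ(W) = W for every vertex W of G(V); that is, σ is the identity automorphism. -/
open Module Submodule

section aux
variable {F V : Type*} [Field F] [AddCommGroup V] [Module F V] [FiniteDimensional F V]

lemma aux_sep {W : Submodule F V} {x : V} (hx : x ∉ W) :
    ∃ H : Submodule F V, finrank F H + 1 = finrank F V ∧ W ≤ H ∧ x ∉ H := by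
  obtain ⟨f, hfx, hmap⟩ := W.exists_dual_map_eq_bot_of_notMem hx inferInstance
  have hf : f ≠ 0 := fun h => hfx (by simp [h])
  refine ⟨LinearMap.ker f, Module.Dual.finrank_ker_add_one_of_ne_zero hf, ?_, ?_⟩
  · intro y hy
    have h2 : f y ∈ W.map f := ⟨y, hy, rfl⟩
    rw [hmap] at h2
    simpa using h2
  · simpa [LinearMap.mem_ker] using hfx

lemma aux_hyp_sup {H : Submodule F V} (hH : finrank F H + 1 = finrank F V)
    {K : Submodule F V} (hK : ¬ K ≤ H) : K ⊔ H = ⊤ := by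
  have h1 : H < K ⊔ H := lt_of_le_of_ne le_sup_right
    (fun h => hK (le_trans le_sup_left h.symm.le))
  have h2 := Submodule.finrank_lt_finrank_of_lt h1
  have h3 := (K ⊔ H).finrank_le
  apply Submodule.eq_top_of_finrank_eq
  omega

lemma aux_rank_of_line_sup {K : Submodule F V} (hK : K ≠ ⊤) {α : V} (hα : α ≠ 0)
    (h : Submodule.span F {α} ⊔ K = ⊤) : finrank F K + 1 = finrank F V := by
  have h1 := Submodule.finrank_sup_add_finrank_inf_eq (Submodule.span F {α}) K
  rw [h, finrank_top, finrank_span_singleton hα] at h1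
  have h2 := Submodule.finrank_lt hK
  omega

end aux

/-- an automorphism of `G(V)` fixing every `1`-dimensional subspace
fixes every vertex, i.e. is the identity. -/
theorem stmt_14 (F V : Type*) [Field F] [Fintype F] [AddCommGroup V] [Module F V]
    [FiniteDimensional F V] (n : ℕ) (hn : 3 ≤ n) (hdim : Module.finrank F V = n)
    (σ : sumGraph F V ≃g sumGraph F V)
    (hfix : ∀ (α : V), α ≠ 0 →
      ∀ (h : Submodule.span F {α} ≠ ⊥ ∧ Submodule.span F {α} ≠ ⊤),
        (σ ⟨Submodule.span F {α}, h⟩).1 = Submodule.span F {α}) :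
    ∀ W : {W : Submodule F V // W ≠ ⊥ ∧ W ≠ ⊤}, σ W = W := by
  -- lines are valid vertices
  have hline : ∀ α : V, α ≠ 0 → (Submodule.span F {α} ≠ ⊥ ∧ Submodule.span F {α} ≠ ⊤) := by
    intro α hα
    refine ⟨by simpa [Submodule.span_singleton_eq_bot] using hα, fun h => ?_⟩
    have h1 := finrank_span_singleton (K := F) hα
    rw [h, finrank_top, hdim] at h1
    omega
  have hfix' : ∀ (α : V) (hα : α ≠ 0),
      σ ⟨Submodule.span F {α}, hline α hα⟩ = ⟨Submodule.span F {α}, hline α hα⟩ :=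
    fun α hα => Subtype.ext (hfix α hα _)
  -- adjacency of a line to a vertex
  have hadj_line : ∀ (α : V) (hα : α ≠ 0) (K : {W : Submodule F V // W ≠ ⊥ ∧ W ≠ ⊤}),
      finrank F K.1 + 1 = n →
      ((sumGraph F V).Adj ⟨Submodule.span F {α}, hline α hα⟩ K ↔ α ∉ K.1) := by
    intro α hα K hK
    constructor
    · rintro ⟨-, hsup⟩ hmem
      have : Submodule.span F {α} ≤ K.1 := Submodule.span_le.mpr (by simpa using hmem)
      rw [sup_eq_right.mpr this] at hsup
      exact K.2.2 hsup
    · intro hmem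
      have hns : ¬ Submodule.span F {α} ≤ K.1 :=
        fun h => hmem (h (Submodule.mem_span_singleton_self α))
      refine ⟨fun h => hns (le_of_eq (congrArg Subtype.val h)), ?_⟩
      exact aux_hyp_sup (by rw [hdim]; exact hK) hns
  -- Step A : hyperplane vertices are fixed
  have stepA : ∀ (H : {W : Submodule F V // W ≠ ⊥ ∧ W ≠ ⊤}),
      finrank F H.1 + 1 = n → σ H = H := by
    intro H hH
    -- there is a vector outside H
    obtain ⟨β, -, hβH⟩ := SetLike.exists_of_lt (H.2.2.lt_top : H.1 < ⊤)
    have hβ : β ≠ 0 := fun h => hβH (h ▸ H.1.zero_mem)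
    -- transfer adjacency along σ
    have htrans : ∀ (α : V) (hα : α ≠ 0),
        (sumGraph F V).Adj ⟨Submodule.span F {α}, hline α hα⟩ (σ H) ↔
        (sumGraph F V).Adj ⟨Submodule.span F {α}, hline α hα⟩ H := by
      intro α hα
      conv_lhs => rw [← hfix' α hα]
      exact σ.map_adj_iff
    -- σ H is a hyperplane
    have hadjβ : (sumGraph F V).Adj ⟨Submodule.span F {β}, hline β hβ⟩ (σ H) :=
      (htrans β hβ).mpr ((hadj_line β hβ H hH).mpr hβH)
    have hσH : finrank F (σ H).1 + 1 = n := by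
      rw [← hdim]
      exact aux_rank_of_line_sup (σ H).2.2 hβ hadjβ.2
    -- membership transfers
    refine Subtype.ext ?_
    ext x
    by_cases hx : x = 0
    · simp [hx]
    · have h1 := ((hadj_line x hx (σ H) hσH).symm.trans
        ((htrans x hx).trans (hadj_line x hx H hH)))
      exact not_iff_not.mp h1
  -- Step B : every vertex is fixed
  intro W
  -- every hyperplane is a valid vertex
  have hhypvert : ∀ H : Submodule F V, finrank F H + 1 = n → (H ≠ ⊥ ∧ H ≠ ⊤) := by
    intro H hH
    constructor
    · intro h
      rw [h, finrank_bot] at hH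
      omega
    · intro h
      rw [h, finrank_top, hdim] at hH
      omega
  -- adjacency of a hyperplane vertex to a vertex
  have hadj_hyp : ∀ (H : Submodule F V) (hH : finrank F H + 1 = n)
      (K : {W : Submodule F V // W ≠ ⊥ ∧ W ≠ ⊤}),
      ((sumGraph F V).Adj ⟨H, hhypvert H hH⟩ K ↔ ¬ K.1 ≤ H) := by
    intro H hH K
    constructor
    · rintro ⟨-, hsup⟩ hle
      rw [sup_eq_left.mpr hle] at hsup
      exact (hhypvert H hH).2 hsup
    · intro hle
      refine ⟨fun h => hle (le_of_eq (congrArg Subtype.val h).symm), ?_⟩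
      rw [sup_comm]
      exact aux_hyp_sup (by rw [hdim]; exact hH) hle
  -- transfer through σ using stepA
  have hiff : ∀ (H : Submodule F V), finrank F H + 1 = n → (W.1 ≤ H ↔ (σ W).1 ≤ H) := by
    intro H hH
    have h1 : (sumGraph F V).Adj ⟨H, hhypvert H hH⟩ (σ W) ↔
        (sumGraph F V).Adj ⟨H, hhypvert H hH⟩ W := by
      conv_lhs => rw [← stepA ⟨H, hhypvert H hH⟩ hH]
      exact σ.map_adj_iff
    have h2 := ((hadj_hyp H hH (σ W)).symm.trans (h1.trans (hadj_hyp H hH W)))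
    exact (not_iff_not.mp h2).symm
  refine Subtype.ext (le_antisymm ?_ ?_)
  · intro x hx
    by_contra hc
    obtain ⟨H, hH, hle, hxH⟩ := aux_sep hc
    rw [hdim] at hH
    exact hxH (((hiff H hH).mp hle) hx)
  · intro x hx
    by_contra hc
    obtain ⟨H, hH, hle, hxH⟩ := aux_sep hc
    rw [hdim] at hH
    exact hxH (((hiff H hH).mpr hle) hx)
end

section
/- Let f₁, f₂ be field automorphisms of F_q and let g₁, g₂ : V → V be bijections with g_k additive and g_k(a·v) = f_k(a)·g_k(v) for all a ∈ F_q, v ∈ V (k = 1, 2). If g₁(W) = g₂(W) for every nontrivial proper subspace W of V, then f₁ = f₂ and there exists a nonzero scalar c ∈ F_q such that g₂(v) = c·g₁(v) for all v ∈ V. -/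
/-- uniqueness of the decomposition: if two semilinear bijections
`g₁, g₂` of `V` (relative to field automorphisms `f₁, f₂` of `F_q`) induce the same
map on nontrivial proper subspaces, then `f₁ = f₂` and `g₂ = c • g₁` for some
nonzero scalar `c`. -/
theorem stmt_17 (F V : Type*) [Field F] [Fintype F] [AddCommGroup V] [Module F V]
    [FiniteDimensional F V] (n : ℕ) (hn : 3 ≤ n) (hdim : Module.finrank F V = n)
    (f₁ f₂ : F ≃+* F) (g₁ g₂ : V ≃+ V)
    (hg₁ : ∀ (a : F) (v : V), g₁ (a • v) = f₁ a • g₁ v)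
    (hg₂ : ∀ (a : F) (v : V), g₂ (a • v) = f₂ a • g₂ v)
    (heq : ∀ W : Submodule F V, W ≠ ⊥ → W ≠ ⊤ →
      g₁ '' (W : Set V) = g₂ '' (W : Set V)) :
    f₁ = f₂ ∧ ∃ c : F, c ≠ 0 ∧ ∀ v : V, g₂ v = c • g₁ v := by
  classical
  -- semilinearity of g₁.symm
  have hsymm : ∀ (a : F) (w : V), g₁.symm (a • w) = f₁.symm a • g₁.symm w := by
    intro a w
    apply g₁.injective
    rw [g₁.apply_symm_apply, hg₁, RingEquiv.apply_symm_apply, g₁.apply_symm_apply]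
  -- g injectivity facts
  have hg₁0 : ∀ v : V, g₁ v = 0 ↔ v = 0 := fun v =>
    ⟨fun h => g₁.injective (by rw [h, map_zero]), fun h => by rw [h, map_zero]⟩
  have hg₂0 : ∀ v : V, g₂ v = 0 ↔ v = 0 := fun v =>
    ⟨fun h => g₂.injective (by rw [h, map_zero]), fun h => by rw [h, map_zero]⟩
  -- spans of single vectors are not top
  have hspan_ne_top : ∀ u : V, u ≠ 0 → Submodule.span F ({u} : Set V) ≠ ⊤ := by
    intro u hu htop
    have h1 : Module.finrank F (Submodule.span F ({u} : Set V)) = 1 :=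
      finrank_span_singleton hu
    rw [htop, finrank_top] at h1
    omega
  -- key : each nonzero u has a scalar
  have key : ∀ u : V, u ≠ 0 → ∃ c : F, c ≠ 0 ∧ g₂ u = c • g₁ u := by
    intro u hu
    have hbot : Submodule.span F ({u} : Set V) ≠ ⊥ := by
      simp [Submodule.span_singleton_eq_bot, hu]
    have h := heq _ hbot (hspan_ne_top u hu)
    have hmem : g₂ u ∈ g₂ '' (Submodule.span F ({u} : Set V) : Set V) :=
      ⟨u, Submodule.mem_span_singleton_self u, rfl⟩
    rw [← h] at hmem
    obtain ⟨w, hw, hgw⟩ := hmem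
    obtain ⟨a, ha⟩ := Submodule.mem_span_singleton.mp hw
    refine ⟨f₁ a, ?_, ?_⟩
    · intro h0
      have : g₂ u = 0 := by rw [← hgw, ← ha, hg₁, h0, zero_smul]
      exact hu ((hg₂0 u).mp this)
    · rw [← hgw, ← ha, hg₁]
  -- step : scalars agree for u, v with v outside span u
  have step : ∀ (u v : V) (cu cv : F), u ≠ 0 → v ∉ Submodule.span F ({u} : Set V) →
      g₂ u = cu • g₁ u → g₂ v = cv • g₁ v → cu = cv := by
    intro u v cu cv hu hv h1 h2
    have hv0 : v ≠ 0 := fun h => hv (h ▸ (Submodule.span F ({u} : Set V)).zero_mem)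
    have huv : u + v ≠ 0 := by
      intro h
      apply hv
      rw [Submodule.mem_span_singleton]
      exact ⟨-1, by rw [neg_one_smul]; linear_combination (norm := abel) -h⟩
    obtain ⟨cw, hcw0, hcw⟩ := key (u + v) huv
    have hsum : cw • g₁ u + cw • g₁ v = cu • g₁ u + cv • g₁ v := by
      rw [← smul_add, ← map_add, ← hcw, map_add, h1, h2]
    have hzero : (cw - cu) • g₁ u + (cw - cv) • g₁ v = 0 := by
      rw [sub_smul, sub_smul]
      linear_combination (norm := abel) hsum
    have hzero' : f₁.symm (cw - cu) • u + f₁.symm (cw - cv) • v = 0 := by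
      have := congrArg g₁.symm hzero
      rw [map_add, map_zero] at this
      rw [hsymm, hsymm, g₁.symm_apply_apply, g₁.symm_apply_apply] at this
      exact this
    set a := f₁.symm (cw - cu) with ha
    set b := f₁.symm (cw - cv) with hb
    have hbv : b • v = -(a • u) := by linear_combination (norm := abel) hzero'
    have hbz : b = 0 := by
      by_contra hbz
      apply hv
      rw [Submodule.mem_span_singleton]
      refine ⟨-(b⁻¹ * a), ?_⟩
      have hv' : v = b⁻¹ • (b • v) := by rw [smul_smul, inv_mul_cancel₀ hbz, one_smul]
      rw [hv', hbv, smul_neg, smul_smul, ← neg_smul]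
    have hcv : cw = cv := by
      have : cw - cv = 0 := by
        have := hbz
        rw [hb] at this
        have := congrArg f₁ this
        rwa [RingEquiv.apply_symm_apply, map_zero] at this
      exact sub_eq_zero.mp this
    have haz : a = 0 := by
      have : a • u = 0 := by
        rw [hbz, zero_smul, add_zero] at hzero'
        exact hzero'
      rcases smul_eq_zero.mp this with h | h
      · exact h
      · exact absurd h hu
    have hcu : cw = cu := by
      have : cw - cu = 0 := by
        rw [ha] at haz
        have := congrArg f₁ haz
        rwa [RingEquiv.apply_symm_apply, map_zero] at this
      exact sub_eq_zero.mp this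
    rw [← hcu, hcv]
  -- pick a base vector
  have : Nontrivial V := Module.nontrivial_of_finrank_pos (R := F) (by omega)
  obtain ⟨u₀, hu₀⟩ := exists_ne (0 : V)
  obtain ⟨c, hc0, hc⟩ := key u₀ hu₀
  -- all nonzero vectors get scalar c
  have hall : ∀ v : V, g₂ v = c • g₁ v := by
    intro v
    rcases eq_or_ne v 0 with rfl | hv0
    · rw [map_zero, map_zero, smul_zero]
    obtain ⟨d, hd0, hd⟩ := key v hv0
    -- find w outside both spans
    have hsup : Submodule.span F ({u₀} : Set V) ⊔ Submodule.span F ({v} : Set V) ≠ ⊤ := by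
      intro htop
      have h2 : Module.finrank F (Submodule.span F ({u₀, v} : Set V)) ≤ 2 := by
        refine (finrank_span_le_card _).trans ?_
        rw [Set.toFinset_insert, Set.toFinset_singleton]
        exact (Finset.card_insert_le _ _).trans (by simp)
      rw [show ({u₀, v} : Set V) = {u₀} ∪ {v} by rfl, Submodule.span_union, htop,
        finrank_top] at h2
      omega
    have hex : ∃ w, w ∉ Submodule.span F ({u₀} : Set V) ⊔ Submodule.span F ({v} : Set V) := by
      by_contra h
      push_neg at h
      exact hsup (Submodule.eq_top_iff'.mpr h)
    obtain ⟨w, hw⟩ := hex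
    have hw₁ : w ∉ Submodule.span F ({u₀} : Set V) := fun h => hw (Submodule.mem_sup_left h)
    have hw₂ : w ∉ Submodule.span F ({v} : Set V) := fun h => hw (Submodule.mem_sup_right h)
    have hw0 : w ≠ 0 := fun h => hw₁ (h ▸ (Submodule.span F ({u₀} : Set V)).zero_mem)
    obtain ⟨e, he0, he⟩ := key w hw0
    have h1 : c = e := step u₀ w c e hu₀ hw₁ hc he
    have h2 : d = e := step v w d e hv0 hw₂ hd he
    rw [hd, h2, ← h1]
  -- f₁ = f₂
  refine ⟨?_, c, hc0, hall⟩
  ext a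
  have e1 : g₂ (a • u₀) = f₂ a • c • g₁ u₀ := by rw [hg₂, hc]
  have e2 : g₂ (a • u₀) = c • f₁ a • g₁ u₀ := by rw [hall, hg₁]
  have e3 : (f₂ a * c - c * f₁ a) • g₁ u₀ = 0 := by
    rw [sub_smul, mul_smul, mul_smul, ← e1, ← e2, sub_self]
  have hne : g₁ u₀ ≠ 0 := fun h => hu₀ ((hg₁0 u₀).mp h)
  rcases smul_eq_zero.mp e3 with h | h
  · have h' : f₂ a * c = c * f₁ a := sub_eq_zero.mp h
    rw [mul_comm] at h'
    exact (mul_left_cancel₀ hc0 h').symm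
  · exact absurd h hne
end
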